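/- Let G be a finite group, let M be a metric space whose metric d is G-invariant (d(g·x, g·y) = d(x,y) for all g ∈ G, x, y ∈ M) and on which G acts continuously, and let A ⊆ M be a nonempty closed G-invariant subset. Suppose σ : M → C(I,M) is an equivariant continuous path field (σ(x)(0) = x for all x) such that σ(x)(t) ≠ x for every x ∉ A and every t ∈ (0,1]. Then the map φ : M → M defined by φ(x) = σ(x)(min(d(x,A),1)) is continuous and equivariant, satisfies Fix φ = {x ∈ M : φ(x) = x} = A, and is G-homotopic to the identity map of M via the equivariant homotopy H(x,s) = σ(x)(s · min(d(x,A),1)). -/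

import Mathlib

/-- The distance to `A`, clamped to `1`, as an element of the unit interval. -/
noncomputable def clampedDist {M : Type*} [MetricSpace M] (x : M) (A : Set M) : unitInterval :=
  ⟨min (Metric.infDist x A) 1, ⟨le_min Metric.infDist_nonneg zero_le_one, min_le_right _ _⟩⟩

lemma clampedDist_continuous {M : Type*} [MetricSpace M] (A : Set M) :
    Continuous fun x : M => clampedDist x A :=
  Continuous.subtype_mk (((Metric.continuous_infDist_pt A)).min continuous_const) _

lemma infDist_smul_le {G M : Type*} [Group G] [MetricSpace M] [MulAction G M]
    (hd : ∀ (g : G) (x y : M), dist (g • x) (g • y) = dist x y)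
    {A : Set M} (hA : A.Nonempty)
    (hAinv : ∀ (g : G), ∀ a ∈ A, g • a ∈ A) (g : G) (x : M) :
    Metric.infDist (g • x) A ≤ Metric.infDist x A := by
  apply le_of_forall_pos_le_add
  intro ε hε
  obtain ⟨a, haA, ha⟩ := (Metric.infDist_lt_iff hA).1
    (lt_add_of_pos_right (Metric.infDist x A) hε)
  calc Metric.infDist (g • x) A ≤ dist (g • x) (g • a) := Metric.infDist_le_dist_of_mem
        (hAinv g a haA)
    _ = dist x a := hd g x a
    _ ≤ Metric.infDist x A + ε := ha.le

lemma infDist_smul {G M : Type*} [Group G] [MetricSpace M] [MulAction G M]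
    (hd : ∀ (g : G) (x y : M), dist (g • x) (g • y) = dist x y)
    {A : Set M} (hA : A.Nonempty)
    (hAinv : ∀ (g : G), ∀ a ∈ A, g • a ∈ A) (g : G) (x : M) :
    Metric.infDist (g • x) A = Metric.infDist x A := by
  refine le_antisymm (infDist_smul_le hd hA hAinv g x) ?_
  have := infDist_smul_le hd hA hAinv g⁻¹ (g • x)
  simpa using this

lemma clampedDist_smul {G M : Type*} [Group G] [MetricSpace M] [MulAction G M]
    (hd : ∀ (g : G) (x y : M), dist (g • x) (g • y) = dist x y)
    {A : Set M} (hA : A.Nonempty)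
    (hAinv : ∀ (g : G), ∀ a ∈ A, g • a ∈ A) (g : G) (x : M) :
    clampedDist (g • x) A = clampedDist x A := by
  simp [clampedDist, infDist_smul hd hA hAinv g x]

/-- Given an equivariant path field `σ` on a metric `G`-space with invariant metric, whose paths
leave their starting point immediately outside the closed invariant set `A`, the map
`φ(x) = σ(x)(min(d(x,A),1))` is a continuous equivariant map with fixed point set exactly `A`,
`G`-homotopic to the identity via `H(x,s) = σ(x)(s·min(d(x,A),1))`. -/
theorem g_deformation_with_prescribed_fixed_point_set
    {G M : Type*} [Group G] [Finite G] [MetricSpace M] [MulAction G M]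
    [ContinuousConstSMul G M]
    (hd : ∀ (g : G) (x y : M), dist (g • x) (g • y) = dist x y)
    (A : Set M) (hA : A.Nonempty) (hAc : IsClosed A)
    (hAinv : ∀ (g : G), ∀ a ∈ A, g • a ∈ A)
    (σ : M → C(unitInterval, M)) (hσc : Continuous σ)
    (hσe : ∀ (g : G) (x : M) (t : unitInterval), σ (g • x) t = g • σ x t)
    (hσ0 : ∀ x : M, σ x 0 = x)
    (hns : ∀ x : M, x ∉ A → ∀ t : unitInterval, t ≠ 0 → σ x t ≠ x) :
    (Continuous fun x : M => σ x (clampedDist x A)) ∧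
    (∀ (g : G) (x : M), σ (g • x) (clampedDist (g • x) A) = g • σ x (clampedDist x A)) ∧
    ({x : M | σ x (clampedDist x A) = x} = A) ∧
    (Continuous fun z : M × unitInterval => σ z.1 (z.2 * clampedDist z.1 A)) ∧
    (∀ (g : G) (x : M) (s : unitInterval),
      σ (g • x) (s * clampedDist (g • x) A) = g • σ x (s * clampedDist x A)) ∧
    (∀ x : M, σ x ((0 : unitInterval) * clampedDist x A) = x) ∧
    (∀ x : M, σ x ((1 : unitInterval) * clampedDist x A) = σ x (clampedDist x A)) := by
  have hclamp0 : ∀ x ∈ A, clampedDist x A = 0 := by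
    intro x hx
    have : Metric.infDist x A = 0 := Metric.infDist_zero_of_mem hx
    simp [clampedDist, this]
  have hclampne : ∀ x : M, x ∉ A → clampedDist x A ≠ 0 := by
    intro x hx h
    have hpos : 0 < Metric.infDist x A :=
      (hAc.notMem_iff_infDist_pos hA).1 hx
    have h1 : min (Metric.infDist x A) 1 = 0 := congrArg Subtype.val h
    have h2 : 0 < min (Metric.infDist x A) 1 := lt_min hpos one_pos
    linarith
  refine ⟨?_, ?_, ?_, ?_, ?_, ?_, ?_⟩
  · exact continuous_eval.comp (hσc.prodMk (clampedDist_continuous A))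
  · intro g x
    rw [clampedDist_smul hd hA hAinv, hσe]
  · ext x
    simp only [Set.mem_setOf_eq]
    constructor
    · intro h
      by_contra hx
      exact hns x hx _ (hclampne x hx) h
    · intro hx
      rw [hclamp0 x hx, hσ0]
  · have hm : Continuous fun z : M × unitInterval => z.2 * clampedDist z.1 A := by
      apply Continuous.subtype_mk
      exact (continuous_subtype_val.comp continuous_snd).mul
        (continuous_subtype_val.comp ((clampedDist_continuous A).comp continuous_fst))
    exact continuous_eval.comp ((hσc.comp continuous_fst).prodMk hm)
  · intro g x s
    rw [clampedDist_smul hd hA hAinv, hσe]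
  · intro x; rw [zero_mul, hσ0]
  · intro x; rw [one_mul]
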